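/- For every positive integer n with n ≡ 0 (mod 4), t(1,3,48;n) = t(1,6,6;n/4) and t(1,3,48;n) = 2·N(1,3,48;2n+13). -/

import Mathlib

def tri (x : ℤ) : ℤ := x * (x + 1) / 2

noncomputable def N (a b c n : ℕ) : ℕ :=
  Nat.card {p : ℤ × ℤ × ℤ // (n : ℤ) = a * p.1 ^ 2 + b * p.2.1 ^ 2 + c * p.2.2 ^ 2}

noncomputable def t (a b c n : ℕ) : ℕ :=
  Nat.card {p : ℤ × ℤ × ℤ // (n : ℤ) = a * tri p.1 + b * tri p.2.1 + c * tri p.2.2}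

noncomputable def T (a b c n : ℕ) : ℕ :=
  Nat.card {p : ℕ × ℕ × ℕ // (n : ℤ) = a * tri p.1 + b * tri p.2.1 + c * tri p.2.2}



lemma two_tri (x : ℤ) : 2 * tri x = x * (x + 1) := by
  have h : (2:ℤ) ∣ x * (x + 1) := by
    obtain ⟨k, hk⟩ := Int.even_mul_succ_self x
    exact ⟨k, by omega⟩
  exact Int.mul_ediv_cancel' h

lemma sqmod8 (u : ℤ) :
    (u % 2 = 1 ∧ u ^ 2 % 8 = 1) ∨ (u % 4 = 2 ∧ u ^ 2 % 8 = 4) ∨ (u % 4 = 0 ∧ u ^ 2 % 8 = 0) := by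
  have h : u ^ 2 % 8 = (u % 8) ^ 2 % 8 := by rw [pow_two, pow_two, Int.mul_emod]
  obtain ⟨s, hs⟩ : ∃ s, s = u ^ 2 := ⟨_, rfl⟩
  obtain ⟨a, ha⟩ : ∃ a, a = u % 8 := ⟨_, rfl⟩
  rw [← hs, ← ha] at h
  rw [← hs]
  have h0 : 0 ≤ a := by omega
  have h1 : a < 8 := by omega
  interval_cases a <;> norm_num at h <;> omega

lemma oddsq32 (X : ℤ) (hX : X % 2 = 1) :
    (X ^ 2 % 32 = 1 ∧ (X % 16 = 1 ∨ X % 16 = 15)) ∨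
    (X ^ 2 % 32 = 9 ∧ (X % 16 = 3 ∨ X % 16 = 13)) ∨
    (X ^ 2 % 32 = 25 ∧ (X % 16 = 5 ∨ X % 16 = 11)) ∨
    (X ^ 2 % 32 = 17 ∧ (X % 16 = 7 ∨ X % 16 = 9)) := by
  have h : X ^ 2 % 32 = (X % 32) ^ 2 % 32 := by rw [pow_two, pow_two, Int.mul_emod]
  obtain ⟨s, hs⟩ : ∃ s, s = X ^ 2 := ⟨_, rfl⟩
  obtain ⟨a, ha⟩ : ∃ a, a = X % 32 := ⟨_, rfl⟩
  rw [← hs, ← ha] at h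
  rw [← hs]
  have h0 : 0 ≤ a := by omega
  have h1 : a < 32 := by omega
  interval_cases a <;> first | omega | (norm_num at h <;> omega)

lemma F1 {M u v w : ℤ} (hM : M % 8 = 5) (h : M = u ^ 2 + 3 * v ^ 2 + 48 * w ^ 2) :
    u % 2 = 1 ∧ v % 4 = 2 := by
  have hu := sqmod8 u
  have hv := sqmod8 v
  have hw := sqmod8 w
  obtain ⟨su, hsu⟩ : ∃ s, s = u ^ 2 := ⟨_, rfl⟩
  obtain ⟨sv, hsv⟩ : ∃ s, s = v ^ 2 := ⟨_, rfl⟩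
  obtain ⟨sw, hsw⟩ : ∃ s, s = w ^ 2 := ⟨_, rfl⟩
  rw [← hsu] at h hu
  rw [← hsv] at h hv
  rw [← hsw] at h hw
  omega

lemma F2 {M X Y Z : ℤ} (hM : M % 8 = 5) (hX : X % 2 = 1) (hY : Y % 2 = 1) (hZ : Z % 2 = 1)
    (h : 4 * M = X ^ 2 + 3 * Y ^ 2 + 48 * Z ^ 2) :
    ((X - Y) % 16 = 0 ∧ (X + Y) % 16 ≠ 0) ∨ ((X + Y) % 16 = 0 ∧ (X - Y) % 16 ≠ 0) := by
  have hXs := oddsq32 X hX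
  have hYs := oddsq32 Y hY
  have hZs := sqmod8 Z
  obtain ⟨sX, hsX⟩ : ∃ s, s = X ^ 2 := ⟨_, rfl⟩
  obtain ⟨sY, hsY⟩ : ∃ s, s = Y ^ 2 := ⟨_, rfl⟩
  obtain ⟨sZ, hsZ⟩ : ∃ s, s = Z ^ 2 := ⟨_, rfl⟩
  rw [← hsX] at h hXs
  rw [← hsY] at h hYs
  rw [← hsZ] at h hZs
  omega


lemma H148 (x y z : ℤ) :
    8 * (tri x + 3 * tri y + 48 * tri z) + 52
      = (2*x+1) ^ 2 + 3 * (2*y+1) ^ 2 + 48 * (2*z+1) ^ 2 := by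
  linear_combination 4 * two_tri x + 12 * two_tri y + 192 * two_tri z

lemma H166 (a b c : ℤ) :
    8 * (tri a + 6 * tri b + 6 * tri c) + 13
      = (2*a+1) ^ 2 + 6 * (2*b+1) ^ 2 + 6 * (2*c+1) ^ 2 := by
  linear_combination 4 * two_tri a + 24 * two_tri b + 24 * two_tri c

lemma card_eq_two_mul {α β : Type} (f : α → Bool × β) (g : Bool × β → α)
    (hgf : Function.LeftInverse g f) (hfg : Function.RightInverse g f) :
    Nat.card α = 2 * Nat.card β := by
  rw [Nat.card_congr (⟨f, g, hgf, hfg⟩ : α ≃ Bool × β), Nat.card_prod]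
  simp [Nat.card_eq_fintype_card]


def f1 (n : ℕ) (h4 : n % 4 = 0) :
    {p : ℤ × ℤ × ℤ // (n : ℤ) = tri p.1 + 3 * tri p.2.1 + 48 * tri p.2.2} →
      Bool × {p : ℤ × ℤ × ℤ // 2 * (n : ℤ) + 13 = p.1 ^ 2 + 3 * p.2.1 ^ 2 + 48 * p.2.2 ^ 2}
  | ⟨(x, y, z), hp⟩ =>
    if hc : (x - y) % 8 = 0 then
      (true, ⟨((x + 3*y + 2)/2, 4*z + 2, (x - y)/8), by
        obtain ⟨w, hw⟩ : ∃ w, x - y = 8 * w := ⟨(x - y)/8, by omega⟩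
        obtain ⟨u, hu⟩ : ∃ u, x + 3*y + 2 = 2 * u := ⟨(x + 3*y + 2)/2, by omega⟩
        have e1 : (x + 3*y + 2)/2 = u := by omega
        have e2 : (x - y)/8 = w := by omega
        simp only [e1, e2]
        have hX : 2*x+1 = u + 12*w := by omega
        have hY : 2*y+1 = u - 4*w := by omega
        have H3 : 4 * (2 * (n:ℤ) + 13) = 4 * (u ^ 2 + 3 * (4*z+2) ^ 2 + 48 * w ^ 2) := by
          linear_combination 8 * hp + 4 * two_tri x + 12 * two_tri y + 192 * two_tri z
            + (2*x+1 + u + 12*w) * hX + 3 * (2*y+1 + u - 4*w) * hY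
        linarith⟩)
    else
      (false, ⟨((x - 3*y - 1)/2, 4*z + 2, (x + y + 1)/8), by
        have hM : (2 * (n:ℤ) + 13) % 8 = 5 := by omega
        have H' := H148 x y z
        rw [← hp] at H'
        have H2 : 4 * (2 * (n:ℤ) + 13) = (2*x+1)^2 + 3*(2*y+1)^2 + 48*(2*z+1)^2 := by
          linear_combination H'
        have hF := F2 hM (by omega) (by omega) (by omega) H2
        have hc2 : (x + y + 1) % 8 = 0 := by omega
        obtain ⟨w, hw⟩ : ∃ w, x + y + 1 = 8 * w := ⟨(x + y + 1)/8, by omega⟩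
        obtain ⟨u, hu⟩ : ∃ u, x - 3*y - 1 = 2 * u := ⟨(x - 3*y - 1)/2, by omega⟩
        have e1 : (x - 3*y - 1)/2 = u := by omega
        have e2 : (x + y + 1)/8 = w := by omega
        simp only [e1, e2]
        have hX : 2*x+1 = u + 12*w := by omega
        have hY : 2*y+1 = 4*w - u := by omega
        have H3 : 4 * (2 * (n:ℤ) + 13) = 4 * (u ^ 2 + 3 * (4*z+2) ^ 2 + 48 * w ^ 2) := by
          linear_combination 8 * hp + 4 * two_tri x + 12 * two_tri y + 192 * two_tri z
            + (2*x+1 + u + 12*w) * hX + 3 * (2*y+1 + 4*w - u) * hY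
        linarith⟩)

def g1 (n : ℕ) (h4 : n % 4 = 0) :
    Bool × {p : ℤ × ℤ × ℤ // 2 * (n : ℤ) + 13 = p.1 ^ 2 + 3 * p.2.1 ^ 2 + 48 * p.2.2 ^ 2} →
      {p : ℤ × ℤ × ℤ // (n : ℤ) = tri p.1 + 3 * tri p.2.1 + 48 * tri p.2.2}
  | (true, ⟨(u, v, w), hq⟩) =>
      ⟨((u + 12*w - 1)/2, (u - 4*w - 1)/2, (v - 2)/4), by
        replace hq : 2 * (n:ℤ) + 13 = u ^ 2 + 3 * v ^ 2 + 48 * w ^ 2 := hq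
        have hM : (2 * (n:ℤ) + 13) % 8 = 5 := by omega
        obtain ⟨hu, hv⟩ := F1 hM hq
        obtain ⟨j, hj⟩ : ∃ j, u = 2*j + 1 := ⟨(u-1)/2, by omega⟩
        obtain ⟨k, hk⟩ : ∃ k, v = 4*k + 2 := ⟨(v-2)/4, by omega⟩
        have e1 : (u + 12*w - 1)/2 = j + 6*w := by omega
        have e2 : (u - 4*w - 1)/2 = j - 2*w := by omega
        have e3 : (v - 2)/4 = k := by omega
        simp only [e1, e2, e3]
        rw [hj, hk] at hq
        have HH := H148 (j + 6*w) (j - 2*w) k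
        have H8 : 8 * (n:ℤ) = 8 * (tri (j + 6*w) + 3 * tri (j - 2*w) + 48 * tri k) := by
          linear_combination 4 * hq - HH
        linarith⟩
  | (false, ⟨(u, v, w), hq⟩) =>
      ⟨((u + 12*w - 1)/2, (4*w - u - 1)/2, (v - 2)/4), by
        replace hq : 2 * (n:ℤ) + 13 = u ^ 2 + 3 * v ^ 2 + 48 * w ^ 2 := hq
        have hM : (2 * (n:ℤ) + 13) % 8 = 5 := by omega
        obtain ⟨hu, hv⟩ := F1 hM hq
        obtain ⟨j, hj⟩ : ∃ j, u = 2*j + 1 := ⟨(u-1)/2, by omega⟩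
        obtain ⟨k, hk⟩ : ∃ k, v = 4*k + 2 := ⟨(v-2)/4, by omega⟩
        have e1 : (u + 12*w - 1)/2 = j + 6*w := by omega
        have e2 : (4*w - u - 1)/2 = 2*w - j - 1 := by omega
        have e3 : (v - 2)/4 = k := by omega
        simp only [e1, e2, e3]
        rw [hj, hk] at hq
        have HH := H148 (j + 6*w) (2*w - j - 1) k
        have H8 : 8 * (n:ℤ) = 8 * (tri (j + 6*w) + 3 * tri (2*w - j - 1) + 48 * tri k) := by
          linear_combination 4 * hq - HH
        linarith⟩

lemma key1 (n : ℕ) (h4 : n % 4 = 0) :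
    Nat.card {p : ℤ × ℤ × ℤ // (n : ℤ) = tri p.1 + 3 * tri p.2.1 + 48 * tri p.2.2}
      = 2 * Nat.card {p : ℤ × ℤ × ℤ //
          2 * (n : ℤ) + 13 = p.1 ^ 2 + 3 * p.2.1 ^ 2 + 48 * p.2.2 ^ 2} := by
  have hM : (2 * (n:ℤ) + 13) % 8 = 5 := by omega
  refine card_eq_two_mul (f1 n h4) (g1 n h4) ?_ ?_
  · rintro ⟨⟨x, y, z⟩, hp⟩
    by_cases hc : (x - y) % 8 = 0
    · simp only [f1, dif_pos hc, g1]
      refine Subtype.ext ?_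
      simp only [Prod.mk.injEq]
      exact ⟨by omega, by omega, by omega⟩
    · have H' := H148 x y z
      rw [← hp] at H'
      have H2 : 4 * (2 * (n:ℤ) + 13) = (2*x+1)^2 + 3*(2*y+1)^2 + 48*(2*z+1)^2 := by
        linear_combination H'
      have hF := F2 hM (by omega) (by omega) (by omega) H2
      have hc2 : (x + y + 1) % 8 = 0 := by omega
      simp only [f1, dif_neg hc, g1]
      refine Subtype.ext ?_
      simp only [Prod.mk.injEq]
      exact ⟨by omega, by omega, by omega⟩
  · rintro ⟨b, ⟨⟨u, v, w⟩, hq⟩⟩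
    replace hq : 2 * (n:ℤ) + 13 = u ^ 2 + 3 * v ^ 2 + 48 * w ^ 2 := hq
    obtain ⟨hu, hv⟩ := F1 hM hq
    cases b
    · have hxy : ((u + 12*w - 1)/2 - (4*w - u - 1)/2) % 8 ≠ 0 := by omega
      simp only [g1, f1, hxy, dite_false, dite_true, reduceDIte, not_false_eq_true]
      simp only [Prod.mk.injEq]
      refine ⟨trivial, Subtype.ext ?_⟩
      simp only [Prod.mk.injEq]
      exact ⟨by omega, by omega, by omega⟩
    · have hxy : ((u + 12*w - 1)/2 - (u - 4*w - 1)/2) % 8 = 0 := by omega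
      simp only [g1, f1, hxy, dite_false, dite_true, reduceDIte, not_false_eq_true]
      simp only [Prod.mk.injEq]
      refine ⟨trivial, Subtype.ext ?_⟩
      simp only [Prod.mk.injEq]
      exact ⟨by omega, by omega, by omega⟩

def f2 (n m : ℕ) (hm : n = 4 * m) :
    {p : ℤ × ℤ × ℤ // (m : ℤ) = tri p.1 + 6 * tri p.2.1 + 6 * tri p.2.2} →
      Bool × {p : ℤ × ℤ × ℤ // 2 * (n : ℤ) + 13 = p.1 ^ 2 + 3 * p.2.1 ^ 2 + 48 * p.2.2 ^ 2}
  | ⟨(a, b, c), hp⟩ =>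
    if hc : (b - c) % 2 = 0 then
      (true, ⟨(2*a + 1, 2*b + 2*c + 2, (b - c)/2), by
        have hn : (n:ℤ) = 4 * (m:ℤ) := by omega
        obtain ⟨w, hw⟩ : ∃ w, b - c = 2 * w := ⟨(b - c)/2, by omega⟩
        have e1 : (b - c)/2 = w := by omega
        simp only [e1]
        have HH := H166 a b c
        rw [← hp] at HH
        linear_combination 2 * hn + HH + 12 * (b - c + 2*w) * hw⟩)
    else
      (false, ⟨(2*a + 1, 2*b - 2*c, (b + c + 1)/2), by
        have hn : (n:ℤ) = 4 * (m:ℤ) := by omega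
        obtain ⟨w, hw⟩ : ∃ w, b + c + 1 = 2 * w := ⟨(b + c + 1)/2, by omega⟩
        have e1 : (b + c + 1)/2 = w := by omega
        simp only [e1]
        have HH := H166 a b c
        rw [← hp] at HH
        linear_combination 2 * hn + HH + 12 * (b + c + 1 + 2*w) * hw⟩)

def g2 (n m : ℕ) (hm : n = 4 * m) :
    Bool × {p : ℤ × ℤ × ℤ // 2 * (n : ℤ) + 13 = p.1 ^ 2 + 3 * p.2.1 ^ 2 + 48 * p.2.2 ^ 2} →
      {p : ℤ × ℤ × ℤ // (m : ℤ) = tri p.1 + 6 * tri p.2.1 + 6 * tri p.2.2}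
  | (true, ⟨(u, v, w), hq⟩) =>
      ⟨((u - 1)/2, (v + 4*w - 2)/4, (v - 4*w - 2)/4), by
        replace hq : 2 * (n:ℤ) + 13 = u ^ 2 + 3 * v ^ 2 + 48 * w ^ 2 := hq
        have hn : (n:ℤ) = 4 * (m:ℤ) := by omega
        have hM : (2 * (n:ℤ) + 13) % 8 = 5 := by omega
        obtain ⟨hu, hv⟩ := F1 hM hq
        obtain ⟨j, hj⟩ : ∃ j, u = 2*j + 1 := ⟨(u-1)/2, by omega⟩
        obtain ⟨k, hk⟩ : ∃ k, v = 4*k + 2 := ⟨(v-2)/4, by omega⟩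
        have e1 : (u - 1)/2 = j := by omega
        have e2 : (v + 4*w - 2)/4 = k + w := by omega
        have e3 : (v - 4*w - 2)/4 = k - w := by omega
        simp only [e1, e2, e3]
        rw [hj, hk] at hq
        have HH := H166 j (k + w) (k - w)
        have H8 : 8 * (m:ℤ) = 8 * (tri j + 6 * tri (k + w) + 6 * tri (k - w)) := by
          linear_combination hq - HH - 2 * hn
        linarith⟩
  | (false, ⟨(u, v, w), hq⟩) =>
      ⟨((u - 1)/2, (v + 4*w - 2)/4, (4*w - v - 2)/4), by
        replace hq : 2 * (n:ℤ) + 13 = u ^ 2 + 3 * v ^ 2 + 48 * w ^ 2 := hq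
        have hn : (n:ℤ) = 4 * (m:ℤ) := by omega
        have hM : (2 * (n:ℤ) + 13) % 8 = 5 := by omega
        obtain ⟨hu, hv⟩ := F1 hM hq
        obtain ⟨j, hj⟩ : ∃ j, u = 2*j + 1 := ⟨(u-1)/2, by omega⟩
        obtain ⟨k, hk⟩ : ∃ k, v = 4*k + 2 := ⟨(v-2)/4, by omega⟩
        have e1 : (u - 1)/2 = j := by omega
        have e2 : (v + 4*w - 2)/4 = k + w := by omega
        have e3 : (4*w - v - 2)/4 = w - k - 1 := by omega
        simp only [e1, e2, e3]
        rw [hj, hk] at hq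
        have HH := H166 j (k + w) (w - k - 1)
        have H8 : 8 * (m:ℤ) = 8 * (tri j + 6 * tri (k + w) + 6 * tri (w - k - 1)) := by
          linear_combination hq - HH - 2 * hn
        linarith⟩

lemma key2 (n m : ℕ) (hm : n = 4 * m) :
    Nat.card {p : ℤ × ℤ × ℤ // (m : ℤ) = tri p.1 + 6 * tri p.2.1 + 6 * tri p.2.2}
      = 2 * Nat.card {p : ℤ × ℤ × ℤ //
          2 * (n : ℤ) + 13 = p.1 ^ 2 + 3 * p.2.1 ^ 2 + 48 * p.2.2 ^ 2} := by
  have hM : (2 * (n:ℤ) + 13) % 8 = 5 := by omega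
  refine card_eq_two_mul (f2 n m hm) (g2 n m hm) ?_ ?_
  · rintro ⟨⟨a, b, c⟩, hp⟩
    by_cases hc : (b - c) % 2 = 0
    · simp only [f2, dif_pos hc, g2]
      refine Subtype.ext ?_
      simp only [Prod.mk.injEq]
      exact ⟨by omega, by omega, by omega⟩
    · simp only [f2, dif_neg hc, g2]
      refine Subtype.ext ?_
      simp only [Prod.mk.injEq]
      exact ⟨by omega, by omega, by omega⟩
  · rintro ⟨b, ⟨⟨u, v, w⟩, hq⟩⟩
    replace hq : 2 * (n:ℤ) + 13 = u ^ 2 + 3 * v ^ 2 + 48 * w ^ 2 := hq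
    obtain ⟨hu, hv⟩ := F1 hM hq
    cases b
    · have hbc : ((v + 4*w - 2)/4 - (4*w - v - 2)/4) % 2 ≠ 0 := by omega
      simp only [g2, f2, hbc, dite_false, dite_true, reduceDIte, not_false_eq_true]
      simp only [Prod.mk.injEq]
      refine ⟨trivial, Subtype.ext ?_⟩
      simp only [Prod.mk.injEq]
      exact ⟨by omega, by omega, by omega⟩
    · have hbc : ((v + 4*w - 2)/4 - (v - 4*w - 2)/4) % 2 = 0 := by omega
      simp only [g2, f2, hbc, dite_false, dite_true, reduceDIte, not_false_eq_true]
      simp only [Prod.mk.injEq]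
      refine ⟨trivial, Subtype.ext ?_⟩
      simp only [Prod.mk.injEq]
      exact ⟨by omega, by omega, by omega⟩

theorem stmt15 (n : ℕ) (hn : 0 < n) (h : n % 4 = 0) :
    t 1 3 48 n = t 1 6 6 (n / 4) ∧ t 1 3 48 n = 2 * N 1 3 48 (2 * n + 13) := by
  obtain ⟨m, hm⟩ : ∃ m, n = 4 * m := ⟨n / 4, by omega⟩
  have hdiv : n / 4 = m := by omega
  have b1 : t 1 3 48 n
      = Nat.card {p : ℤ × ℤ × ℤ // (n : ℤ) = tri p.1 + 3 * tri p.2.1 + 48 * tri p.2.2} :=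
    Nat.card_congr (Equiv.subtypeEquivRight (fun p => by
      push_cast
      constructor <;> intro h' <;> linarith))
  have b2 : t 1 6 6 m
      = Nat.card {p : ℤ × ℤ × ℤ // (m : ℤ) = tri p.1 + 6 * tri p.2.1 + 6 * tri p.2.2} :=
    Nat.card_congr (Equiv.subtypeEquivRight (fun p => by
      push_cast
      constructor <;> intro h' <;> linarith))
  have bN : N 1 3 48 (2 * n + 13)
      = Nat.card {p : ℤ × ℤ × ℤ //
          2 * (n : ℤ) + 13 = p.1 ^ 2 + 3 * p.2.1 ^ 2 + 48 * p.2.2 ^ 2} :=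
    Nat.card_congr (Equiv.subtypeEquivRight (fun p => by
      push_cast
      constructor <;> intro h' <;> linarith))
  constructor
  · rw [hdiv, b1, b2, key1 n h, key2 n m hm]
  · rw [b1, bN, key1 n h]
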